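/- In the random matrix product setup, assume E|ε₀| < ∞ and that condition (δ*) holds for some κ ∈ (0,1). For t ∈ ℤ and n ≥ 0 define B_n = ‖ D̃_t D̃_{t−1} ⋯ D̃_{t−n} ‖₁, J_k = 1{ min_{l=1,…,d} |ε_{t−k−l}| ≤ K₂ }, I_n = 1{ Σ_{k=0}^n J_k > κ n }, and B_{n,2} = (1 − I_n) · B_n. Then there exist constants C < ∞ and γ ∈ (0,1) such that E[ B_{n,2} ] ≤ C γ^n for all n ≥ 0. -/

import Mathlib

open MeasureTheory ProbabilityTheory Finset
noncomputable section

/-- The `d × d` matrix `B(z)`: first row all `z`, subdiagonal entries `(i+1,i)` equal `1`,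
all other entries `0`. -/
def companionMat (d : ℕ) (z : ℝ) : Matrix (Fin d) (Fin d) ℝ :=
  fun i j => if (i : ℕ) = 0 then z else if (i : ℕ) = (j : ℕ) + 1 then 1 else 0

open scoped Classical in
/-- The random matrix `D̃_t = (1 + |ε_t|) B(Δ_t)`. -/
def Dmat {Ω : Type*} (d : ℕ) (Δ δ K₂ : ℝ) (ε : ℤ → Ω → ℝ) (t : ℤ) (ω : Ω) :
    Matrix (Fin d) (Fin d) ℝ :=
  (1 + |ε t ω|) •
    companionMat d (if ∀ l : Fin d, |ε (t - 1 - (l : ℤ)) ω| ≤ K₂ then Δ else δ)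

/-- The ordered product `D̃_t D̃_{t−1} ⋯ D̃_{t−n}`. -/
def DmatProd {Ω : Type*} (d : ℕ) (Δ δ K₂ : ℝ) (ε : ℤ → Ω → ℝ) (t : ℤ) (n : ℕ) (ω : Ω) :
    Matrix (Fin d) (Fin d) ℝ :=
  ((List.range (n + 1)).map (fun k => Dmat d Δ δ K₂ ε (t - k) ω)).prod

/-- The maximum absolute column sum norm `‖A‖₁ = max_k Σ_j |a_{jk}|`. -/
def colSumNorm {d : ℕ} (A : Matrix (Fin d) (Fin d) ℝ) : ℝ :=
  ⨆ k : Fin d, ∑ j : Fin d, |A j k|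

namespace RMPaux

variable {d : ℕ}

lemma colSum_le_colSumNorm [NeZero d] (A : Matrix (Fin d) (Fin d) ℝ) (k : Fin d) :
    ∑ j : Fin d, |A j k| ≤ colSumNorm A := by
  exact le_ciSup (f := fun k : Fin d => ∑ j : Fin d, |A j k|)
    (Set.Finite.bddAbove (Set.finite_range _)) k

lemma colSumNorm_nonneg [NeZero d] (A : Matrix (Fin d) (Fin d) ℝ) : 0 ≤ colSumNorm A := by
  refine le_trans ?_ (colSum_le_colSumNorm A ⟨0, Nat.pos_of_ne_zero (NeZero.ne d)⟩)
  exact Finset.sum_nonneg fun j _ => abs_nonneg _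

lemma colSumNorm_le [NeZero d] {A : Matrix (Fin d) (Fin d) ℝ} {c : ℝ}
    (h : ∀ k : Fin d, ∑ j : Fin d, |A j k| ≤ c) : colSumNorm A ≤ c :=
  ciSup_le h

lemma colSumNorm_mul_le [NeZero d] (A B : Matrix (Fin d) (Fin d) ℝ) :
    colSumNorm (A * B) ≤ colSumNorm A * colSumNorm B := by
  refine colSumNorm_le fun k => ?_
  have h1 : ∀ j : Fin d, |(A * B) j k| ≤ ∑ l : Fin d, |A j l| * |B l k| := by
    intro j
    rw [Matrix.mul_apply]
    refine le_trans (Finset.abs_sum_le_sum_abs _ _) ?_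
    refine Finset.sum_le_sum fun l _ => le_of_eq (abs_mul _ _)
  calc ∑ j : Fin d, |(A * B) j k| ≤ ∑ j : Fin d, ∑ l : Fin d, |A j l| * |B l k| :=
        Finset.sum_le_sum fun j _ => h1 j
    _ = ∑ l : Fin d, (∑ j : Fin d, |A j l|) * |B l k| := by
        rw [Finset.sum_comm]; simp [Finset.sum_mul]
    _ ≤ ∑ l : Fin d, colSumNorm A * |B l k| := by
        refine Finset.sum_le_sum fun l _ => ?_
        exact mul_le_mul_of_nonneg_right (colSum_le_colSumNorm A l) (abs_nonneg _)
    _ = colSumNorm A * ∑ l : Fin d, |B l k| := by rw [Finset.mul_sum]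
    _ ≤ colSumNorm A * colSumNorm B :=
        mul_le_mul_of_nonneg_left (colSum_le_colSumNorm B k) (colSumNorm_nonneg A)

lemma colSumNorm_one_le [NeZero d] : colSumNorm (1 : Matrix (Fin d) (Fin d) ℝ) ≤ 1 := by
  refine colSumNorm_le fun k => ?_
  have : ∀ j : Fin d, |(1 : Matrix (Fin d) (Fin d) ℝ) j k| = if j = k then 1 else 0 := by
    intro j; rw [Matrix.one_apply]; split_ifs <;> simp
  rw [Finset.sum_congr rfl fun j _ => this j]
  simp

lemma colSumNorm_smul_le [NeZero d] (c : ℝ) (hc : 0 ≤ c) (A : Matrix (Fin d) (Fin d) ℝ) :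
    colSumNorm (c • A) ≤ c * colSumNorm A := by
  refine colSumNorm_le fun k => ?_
  have : ∀ j : Fin d, |(c • A) j k| = c * |A j k| := by
    intro j; simp [abs_mul, abs_of_nonneg hc]
  rw [Finset.sum_congr rfl fun j _ => this j, ← Finset.mul_sum]
  exact mul_le_mul_of_nonneg_left (colSum_le_colSumNorm A k) hc

lemma colSumNorm_add_le [NeZero d] (A B : Matrix (Fin d) (Fin d) ℝ) :
    colSumNorm (A + B) ≤ colSumNorm A + colSumNorm B := by
  refine colSumNorm_le fun k => ?_
  calc ∑ j : Fin d, |(A + B) j k| ≤ ∑ j : Fin d, (|A j k| + |B j k|) :=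
        Finset.sum_le_sum fun j _ => abs_add_le _ _
    _ = (∑ j : Fin d, |A j k|) + ∑ j : Fin d, |B j k| := Finset.sum_add_distrib
    _ ≤ colSumNorm A + colSumNorm B :=
        add_le_add (colSum_le_colSumNorm A k) (colSum_le_colSumNorm B k)

lemma colSumNorm_companion_le [NeZero d] {z : ℝ} (hz : 0 ≤ z) :
    colSumNorm (companionMat d z) ≤ z + 1 := by
  refine colSumNorm_le fun k => ?_
  have hb : ∀ j : Fin d, |companionMat d z j k| ≤
      (if (j : ℕ) = 0 then z else 0) + (if (j : ℕ) = (k : ℕ) + 1 then 1 else 0) := by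
    intro j
    unfold companionMat
    split_ifs with h1 h2 <;> simp_all <;> try omega
    · rw [abs_of_nonneg hz]
  refine le_trans (Finset.sum_le_sum fun j _ => hb j) ?_
  rw [Finset.sum_add_distrib]
  have h0 : ∑ j : Fin d, (if (j : ℕ) = 0 then z else 0) = z := by
    have : ∀ j : Fin d, (if (j : ℕ) = 0 then z else 0)
        = if j = (⟨0, Nat.pos_of_ne_zero (NeZero.ne d)⟩ : Fin d) then z else 0 := by
      intro j; congr 1; exact propext (Fin.ext_iff (a := j) (b := ⟨0, Nat.pos_of_ne_zero (NeZero.ne d)⟩)).symm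
    rw [Finset.sum_congr rfl fun j _ => this j, Finset.sum_ite_eq' Finset.univ]
    simp
  have h1 : ∑ j : Fin d, (if (j : ℕ) = (k : ℕ) + 1 then (1:ℝ) else 0) ≤ 1 := by
    by_cases h : (k : ℕ) + 1 < d
    · have : ∀ j : Fin d, (if (j : ℕ) = (k : ℕ) + 1 then (1:ℝ) else 0)
          = if j = (⟨(k : ℕ) + 1, h⟩ : Fin d) then 1 else 0 := by
        intro j; congr 1; simp [Fin.ext_iff]
      rw [Finset.sum_congr rfl fun j _ => this j, Finset.sum_ite_eq' Finset.univ]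
      simp
    · have : ∀ j : Fin d, (if (j : ℕ) = (k : ℕ) + 1 then (1:ℝ) else 0) = 0 := by
        intro j
        rw [if_neg]
        have := j.isLt
        omega
      rw [Finset.sum_congr rfl fun j _ => this j]
      simp
  rw [h0] at *
  linarith

/-- The subdiagonal nilpotent part. -/
def Nmat (d : ℕ) : Matrix (Fin d) (Fin d) ℝ :=
  fun i j => if (i : ℕ) = (j : ℕ) + 1 then 1 else 0

/-- The first-row-of-ones part. -/
def Fmat (d : ℕ) : Matrix (Fin d) (Fin d) ℝ :=
  fun i j => if (i : ℕ) = 0 then 1 else 0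

lemma companion_decomp (z : ℝ) : companionMat d z = z • Fmat d + Nmat d := by
  funext i j
  simp only [companionMat, Fmat, Nmat, Matrix.add_apply, Matrix.smul_apply, smul_eq_mul]
  split_ifs with h1 h2 <;> first | ring1 | (exfalso; omega)

lemma Nmat_pow (m : ℕ) :
    (Nmat d) ^ m = fun i j : Fin d => if (i : ℕ) = (j : ℕ) + m then 1 else 0 := by
  induction m with
  | zero =>
    funext i j
    rw [pow_zero, Matrix.one_apply]
    congr 1
    simp [Fin.ext_iff]
  | succ m ih =>
    funext i j
    rw [pow_succ', Matrix.mul_apply, ih]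
    simp only [Nmat]
    by_cases h : (j : ℕ) + m < d
    · have hg : ∀ l : Fin d, (if (i:ℕ) = (l:ℕ) + 1 then (1:ℝ) else 0) *
          (if (l:ℕ) = (j:ℕ) + m then 1 else 0)
          = (if (i:ℕ) = (l:ℕ) + 1 then (1:ℝ) else 0) *
            (if l = (⟨(j:ℕ) + m, h⟩ : Fin d) then 1 else 0) := by
        intro l
        congr 1
        congr 1
        simp [Fin.ext_iff]
      have hg2 : ∀ l : Fin d, (if (i:ℕ) = (l:ℕ) + 1 then (1:ℝ) else 0) *
          (if l = (⟨(j:ℕ) + m, h⟩ : Fin d) then 1 else 0)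
          = if l = (⟨(j:ℕ) + m, h⟩ : Fin d) then (if (i:ℕ) = (l:ℕ) + 1 then (1:ℝ) else 0) else 0 := by
        intro l
        split_ifs <;> simp
      rw [Finset.sum_congr rfl fun l _ => (hg l).trans (hg2 l), Finset.sum_ite_eq' Finset.univ]
      simp only [Finset.mem_univ, if_true]
      rfl
    · have hz : ∀ l : Fin d, (if (i:ℕ) = (l:ℕ) + 1 then (1:ℝ) else 0) *
          (if (l:ℕ) = (j:ℕ) + m then 1 else 0) = 0 := by
        intro l
        refine mul_eq_zero_of_right _ (if_neg ?_)
        have := l.isLt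
        omega
      rw [Finset.sum_congr rfl fun l _ => hz l]
      have := i.isLt
      simp only [Finset.sum_const_zero]
      rw [if_neg (by omega)]

lemma Nmat_pow_d : (Nmat d) ^ d = 0 := by
  rw [Nmat_pow]
  funext i j
  have := i.isLt
  simp only [Matrix.zero_apply]
  rw [if_neg (by omega)]

lemma colSumNorm_Nmat_pow_le [NeZero d] (m : ℕ) : colSumNorm ((Nmat d) ^ m) ≤ 1 := by
  rw [Nmat_pow]
  refine colSumNorm_le fun k => ?_
  by_cases h : (k : ℕ) + m < d
  · have : ∀ j : Fin d, |if (j:ℕ) = (k:ℕ) + m then (1:ℝ) else 0|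
        = if j = (⟨(k:ℕ) + m, h⟩ : Fin d) then 1 else 0 := by
      intro j
      split_ifs with h1 h2 <;> simp_all [Fin.ext_iff]
    rw [Finset.sum_congr rfl fun j _ => this j, Finset.sum_ite_eq' Finset.univ]
    simp
  · have : ∀ j : Fin d, |if (j:ℕ) = (k:ℕ) + m then (1:ℝ) else 0| = 0 := by
      intro j
      rw [if_neg, abs_zero]
      have := j.isLt
      omega
    rw [Finset.sum_congr rfl fun j _ => this j]
    simp

lemma colSumNorm_Fmat_le [NeZero d] : colSumNorm (Fmat d) ≤ 1 := by
  refine colSumNorm_le fun k => ?_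
  have : ∀ j : Fin d, |Fmat d j k| = if j = (⟨0, Nat.pos_of_ne_zero (NeZero.ne d)⟩ : Fin d) then (1:ℝ) else 0 := by
    intro j
    simp only [Fmat]
    split_ifs with h1 h2 h2 <;> simp only [abs_one, abs_zero]
    · exact absurd (Fin.ext h1) h2
    · exact absurd (congrArg Fin.val h2) h1
  rw [Finset.sum_congr rfl fun j _ => this j, Finset.sum_ite_eq' Finset.univ]
  simp

/-- Error term bound: `‖B(δ)^m − N^m‖ ≤ (2^m − 1) δ` for `0 ≤ δ ≤ 1`. -/
lemma companion_pow_err {δ : ℝ} (hδ0 : 0 ≤ δ) (hδ1 : δ ≤ 1) [NeZero d] (m : ℕ) :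
    colSumNorm ((companionMat d δ) ^ m - (Nmat d) ^ m) ≤ (2 ^ m - 1) * δ := by
  induction m with
  | zero =>
    rw [pow_zero, pow_zero, sub_self]
    refine le_trans (colSumNorm_le (c := 0) fun k => by simp) (by norm_num)
  | succ m ih =>
    have hBN : companionMat d δ - Nmat d = δ • Fmat d := by
      rw [companion_decomp]
      exact add_sub_cancel_right _ _
    have key : (companionMat d δ) ^ (m+1) - (Nmat d) ^ (m+1)
        = companionMat d δ * ((companionMat d δ) ^ m - (Nmat d) ^ m)
          + (δ • Fmat d) * (Nmat d) ^ m := by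
      rw [← hBN, pow_succ', pow_succ']
      noncomm_ring
    rw [key]
    have h1 : colSumNorm (companionMat d δ * ((companionMat d δ) ^ m - (Nmat d) ^ m))
        ≤ (1 + δ) * ((2 ^ m - 1) * δ) := by
      refine le_trans (colSumNorm_mul_le _ _) ?_
      refine mul_le_mul ?_ ih (colSumNorm_nonneg _) (by linarith)
      refine le_trans (colSumNorm_companion_le hδ0) (by linarith)
    have h2 : colSumNorm ((δ • Fmat d) * (Nmat d) ^ m) ≤ δ := by
      refine le_trans (colSumNorm_mul_le _ _) ?_
      have := colSumNorm_Nmat_pow_le (d := d) m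
      have h3 : colSumNorm (δ • Fmat d) ≤ δ := by
        refine le_trans (colSumNorm_smul_le δ hδ0 _) ?_
        have := colSumNorm_Fmat_le (d := d)
        nlinarith [colSumNorm_nonneg (Fmat d)]
      nlinarith [colSumNorm_nonneg ((Nmat d) ^ m), colSumNorm_nonneg (δ • Fmat d)]
    refine le_trans (colSumNorm_add_le _ _) ?_
    have h2m : (1:ℝ) ≤ 2 ^ m := one_le_pow₀ (by norm_num)
    calc colSumNorm _ + colSumNorm _ ≤ (1 + δ) * ((2 ^ m - 1) * δ) + δ := add_le_add h1 h2
      _ ≤ (2 ^ (m+1) - 1) * δ := by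
          rw [pow_succ]
          nlinarith [mul_nonneg (mul_nonneg (sub_nonneg.2 h2m) hδ0) (sub_nonneg.2 hδ1)]

lemma companion_pow_d_le {δ : ℝ} (hδ0 : 0 ≤ δ) (hδ1 : δ ≤ 1) [NeZero d] :
    colSumNorm ((companionMat d δ) ^ d) ≤ (2 ^ d - 1) * δ := by
  have := companion_pow_err (d := d) hδ0 hδ1 d
  rw [Nmat_pow_d, sub_zero] at this
  exact this

/-- partial products of companion matrices. -/
def Qz (d : ℕ) (z : ℕ → ℝ) (j m : ℕ) : Matrix (Fin d) (Fin d) ℝ :=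
  ((List.range m).map (fun i => companionMat d (z (j + i)))).prod

lemma Qz_zero (z : ℕ → ℝ) (j : ℕ) : Qz d z j 0 = 1 := by simp [Qz]

lemma Qz_succ (z : ℕ → ℝ) (j m : ℕ) :
    Qz d z j (m + 1) = companionMat d (z j) * Qz d z (j + 1) m := by
  unfold Qz
  rw [List.range_succ_eq_map]
  simp only [List.map_cons, List.prod_cons, List.map_map]
  have h2 : ((fun i => companionMat d (z (j + i))) ∘ Nat.succ)
      = fun i => companionMat d (z (j + 1 + i)) := by
    funext i
    simp only [Function.comp_apply]
    have harg : j + Nat.succ i = j + 1 + i := by omega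
    rw [harg]
  rw [h2, Nat.add_zero]

lemma Qz_add (z : ℕ → ℝ) (j a b : ℕ) :
    Qz d z j (a + b) = Qz d z j a * Qz d z (j + a) b := by
  unfold Qz
  rw [List.range_add, List.map_append, List.prod_append, List.map_map]
  have h2 : ((fun i => companionMat d (z (j + i))) ∘ (fun x => a + x))
      = fun i => companionMat d (z (j + a + i)) := by
    funext i
    simp only [Function.comp_apply]
    have harg : j + (a + i) = j + a + i := by omega
    rw [harg]
  rw [h2]

lemma Qz_const (z : ℕ → ℝ) (j m : ℕ) (c : ℝ) (hc : ∀ i < m, z (j + i) = c) :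
    Qz d z j m = (companionMat d c) ^ m := by
  unfold Qz
  have : (List.range m).map (fun i => companionMat d (z (j + i)))
      = (List.range m).map (fun _ => companionMat d c) := by
    refine List.map_congr_left fun i hi => ?_
    rw [hc i (List.mem_range.mp hi)]
  rw [this, List.map_const', List.prod_replicate, List.length_range]

lemma Qz_norm_le [NeZero d] {Δ : ℝ} (z : ℕ → ℝ) (hz : ∀ k, 0 ≤ z k ∧ z k ≤ Δ)
    (j m : ℕ) : colSumNorm (Qz d z j m) ≤ (Δ + 1) ^ m := by
  induction m generalizing j with
  | zero => rw [Qz_zero, pow_zero]; exact colSumNorm_one_le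
  | succ m ih =>
    rw [Qz_succ, pow_succ']
    refine le_trans (colSumNorm_mul_le _ _) ?_
    have h0 := (hz j).1
    have h1 := (hz j).2
    refine mul_le_mul (le_trans (colSumNorm_companion_le h0) (by linarith)) (ih (j+1))
      (colSumNorm_nonneg _) (by linarith)

/-- count of `J`-hits in a window, as a sum. -/
def Jcount (J : ℕ → Prop) [DecidablePred J] (j m : ℕ) : ℕ :=
  ∑ i ∈ Finset.range m, if J (j + i) then 1 else 0

lemma Jcount_succ (J : ℕ → Prop) [DecidablePred J] (j m : ℕ) :
    Jcount J j (m + 1) = (if J j then 1 else 0) + Jcount J (j + 1) m := by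
  unfold Jcount
  rw [Finset.sum_range_succ']
  have : ∀ i, (if J (j + (i + 1)) then (1:ℕ) else 0) = if J ((j+1) + i) then 1 else 0 := by
    intro i
    have harg : j + (i + 1) = (j + 1) + i := by omega
    rw [harg]
  rw [Finset.sum_congr rfl fun i _ => this i, Nat.add_zero]
  exact add_comm _ _

lemma Jcount_snoc (J : ℕ → Prop) [DecidablePred J] (j m : ℕ) :
    Jcount J j (m + 1) = Jcount J j m + (if J (j + m) then 1 else 0) := by
  unfold Jcount
  rw [Finset.sum_range_succ]

lemma Jcount_add (J : ℕ → Prop) [DecidablePred J] (j a b : ℕ) :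
    Jcount J j (a + b) = Jcount J j a + Jcount J (j + a) b := by
  induction b with
  | zero => simp [Jcount]
  | succ b ih =>
    have h1 : a + (b + 1) = (a + b) + 1 := by omega
    rw [h1, Jcount_snoc, ih, Jcount_snoc]
    have h2 : j + (a + b) = (j + a) + b := by omega
    rw [h2, Nat.add_assoc]

/-- The key deterministic product bound, by strong induction on `m`. -/
lemma det_bound [NeZero d] {δ Δ : ℝ} (hδ0 : 0 < δ) (hδ1 : δ ≤ 1) (hδΔ : δ ≤ Δ)
    (z : ℕ → ℝ) (J : ℕ → Prop) [DecidablePred J]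
    (hz : ∀ k, 0 ≤ z k ∧ z k ≤ Δ)
    (hJ : ∀ k, ¬ J k → ∀ i < d, z (k + i) = δ) :
    ∀ m j, ∃ g h : ℕ, m ≤ g * d + h + (d - 1) ∧ h ≤ Jcount J j m ∧
      colSumNorm (Qz d z j m) ≤ ((2 ^ d - 1) * δ) ^ g * (Δ + 1) ^ h * (Δ + 1) ^ (d - 1) := by
  have hd : 0 < d := Nat.pos_of_ne_zero (NeZero.ne d)
  have hΔ1 : (1:ℝ) ≤ Δ + 1 := by linarith
  have hCd0 : 0 ≤ (2 ^ d - 1) * δ := by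
    have : (1:ℝ) ≤ 2 ^ d := one_le_pow₀ (by norm_num)
    nlinarith
  intro m
  induction m using Nat.strong_induction_on with
  | _ m IH =>
    intro j
    by_cases hmd : m < d
    · refine ⟨0, 0, by omega, Nat.zero_le _, ?_⟩
      simp only [pow_zero, one_mul]
      refine le_trans (Qz_norm_le z hz j m) ?_
      exact pow_le_pow_right₀ hΔ1 (by omega)
    · push_neg at hmd
      by_cases hJj : J j
      · -- peel one factor
        obtain ⟨m', rfl⟩ : ∃ m', m = m' + 1 := ⟨m - 1, by omega⟩
        obtain ⟨g, h, hc, hh, hb⟩ := IH m' (by omega) (j + 1)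
        refine ⟨g, h + 1, by omega, ?_, ?_⟩
        · rw [Jcount_succ, if_pos hJj]
          omega
        · rw [Qz_succ]
          refine le_trans (colSumNorm_mul_le _ _) ?_
          have h1 : colSumNorm (companionMat d (z j)) ≤ Δ + 1 := by
            refine le_trans (colSumNorm_companion_le (hz j).1) ?_
            linarith [(hz j).2]
          calc colSumNorm (companionMat d (z j)) * colSumNorm (Qz d z (j+1) m')
              ≤ (Δ + 1) * (((2 ^ d - 1) * δ) ^ g * (Δ + 1) ^ h * (Δ + 1) ^ (d - 1)) := by
                refine mul_le_mul h1 hb (colSumNorm_nonneg _) (by linarith)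
            _ = ((2 ^ d - 1) * δ) ^ g * (Δ + 1) ^ (h + 1) * (Δ + 1) ^ (d - 1) := by ring
      · -- block of d δ-factors
        obtain ⟨m', rfl⟩ : ∃ m', m = d + m' := ⟨m - d, by omega⟩
        obtain ⟨g, h, hc, hh, hb⟩ := IH m' (by omega) (j + d)
        have hgd : (g + 1) * d = g * d + d := by ring
        refine ⟨g + 1, h, by omega, ?_, ?_⟩
        · rw [Jcount_add]
          omega
        · rw [Qz_add]
          refine le_trans (colSumNorm_mul_le _ _) ?_
          have h1 : colSumNorm (Qz d z j d) ≤ (2 ^ d - 1) * δ := by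
            rw [Qz_const z j d δ (fun i hi => hJ j hJj i hi)]
            exact companion_pow_d_le (le_of_lt hδ0) hδ1
          calc colSumNorm (Qz d z j d) * colSumNorm (Qz d z (j + d) m')
              ≤ ((2 ^ d - 1) * δ) * (((2 ^ d - 1) * δ) ^ g * (Δ + 1) ^ h * (Δ + 1) ^ (d - 1)) := by
                refine mul_le_mul h1 hb (colSumNorm_nonneg _) hCd0
            _ = ((2 ^ d - 1) * δ) ^ (g + 1) * (Δ + 1) ^ h * (Δ + 1) ^ (d - 1) := by ring

/-- Combination of exponents at the real level. -/
lemma real_combine {c B κ : ℝ} (hc0 : 0 < c) (hc1 : c ≤ 1) (hB : 1 ≤ B)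
    {d : ℕ} (hd : 1 ≤ d) (n g h : ℕ)
    (hcount : (n : ℝ) + 2 ≤ (g : ℝ) * d + h + d) (hh : (h : ℝ) ≤ κ * n) :
    c ^ g * B ^ h ≤ c ^ (((2:ℝ) - d) / d) * (B ^ κ * c ^ ((1 - κ) / (d:ℝ))) ^ (n:ℝ) := by
  have hB0 : (0:ℝ) < B := lt_of_lt_of_le one_pos hB
  have hd0 : (0:ℝ) < d := by exact_mod_cast Nat.pos_of_ne_zero (by omega)
  set Lc := Real.log c with hLc
  set LB := Real.log B with hLB
  have hLc0 : Lc ≤ 0 := Real.log_nonpos hc0.le hc1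
  have hLB0 : 0 ≤ LB := Real.log_nonneg hB
  have hBκ : (0:ℝ) < B ^ κ := Real.rpow_pos_of_pos hB0 κ
  have hcY : (0:ℝ) < c ^ ((1 - κ) / (d:ℝ)) := Real.rpow_pos_of_pos hc0 _
  have hlhs : c ^ g * B ^ h = Real.exp (Lc * g + LB * h) := by
    rw [Real.exp_add, ← Real.rpow_natCast c g, ← Real.rpow_natCast B h,
      Real.rpow_def_of_pos hc0, Real.rpow_def_of_pos hB0]
  have hlog : Real.log (B ^ κ * c ^ ((1 - κ) / (d:ℝ))) = κ * LB + ((1 - κ) / (d:ℝ)) * Lc := by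
    rw [Real.log_mul hBκ.ne' hcY.ne', Real.log_rpow hB0, Real.log_rpow hc0]
  have hrhs : c ^ (((2:ℝ) - d) / d) * (B ^ κ * c ^ ((1 - κ) / (d:ℝ))) ^ (n:ℝ)
      = Real.exp (Lc * (((2:ℝ) - d) / d) + (κ * LB + ((1 - κ) / (d:ℝ)) * Lc) * n) := by
    rw [Real.exp_add, Real.rpow_def_of_pos hc0, Real.rpow_def_of_pos (mul_pos hBκ hcY), hlog]
  rw [hlhs, hrhs]
  rw [Real.exp_le_exp]
  have key1 : ((g:ℝ) * d) * Lc ≤ ((n:ℝ) + 2 - h - d) * Lc :=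
    mul_le_mul_of_nonpos_right (by linarith) hLc0
  have key2 : ((h:ℝ) * LB) * d ≤ ((κ * n) * LB) * d :=
    mul_le_mul_of_nonneg_right (mul_le_mul_of_nonneg_right hh hLB0) hd0.le
  have key3 : 0 ≤ (κ * n - h) * (-Lc) := by
    apply mul_nonneg
    · linarith
    · linarith
  have heq : Lc * (((2:ℝ) - d) / d) + (κ * LB + (1 - κ) / (d:ℝ) * Lc) * n
      = (Lc * ((2:ℝ) - d) + (κ * LB * d + (1 - κ) * Lc) * n) / d := by
    field_simp
  rw [heq, le_div_iff₀ hd0]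
  nlinarith [key1, key2, key3]

lemma lintegral_indep_prod {Ω ι : Type*} [MeasurableSpace Ω] (P : Measure Ω)
    [IsProbabilityMeasure P] (G : ι → Ω → ENNReal) (hmeas : ∀ i, Measurable (G i))
    (hindep : iIndepFun G P) (s : Finset ι) :
    ∫⁻ ω, ∏ i ∈ s, G i ω ∂P = ∏ i ∈ s, ∫⁻ ω, G i ω ∂P := by
  classical
  induction s using Finset.induction_on with
  | empty => simp
  | insert a s ha ih =>
    have hfn : (∏ j ∈ s, G j) = fun ω => ∏ j ∈ s, G j ω :=
      funext fun ω => Finset.prod_apply ω s G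
    have hps : Measurable (∏ j ∈ s, G j) := by
      rw [hfn]
      exact Finset.measurable_prod s fun i _ => hmeas i
    have hip : IndepFun (G a) (∏ j ∈ s, G j) P :=
      (hindep.indepFun_finset_prod_of_notMem hmeas ha).symm
    have h1 : ∫⁻ ω, ∏ i ∈ insert a s, G i ω ∂P = ∫⁻ ω, (G a * ∏ j ∈ s, G j) ω ∂P :=
      lintegral_congr fun ω => by simp [Finset.prod_insert ha, Finset.prod_apply]
    rw [h1, lintegral_mul_eq_lintegral_mul_lintegral_of_indepFun (hmeas a) hps hip,
      Finset.prod_insert ha]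
    congr 1
    rw [← ih]
    exact lintegral_congr fun ω => by rw [hfn]

lemma list_range_prod {M : Type*} [CommMonoid M] (f : ℕ → M) (m : ℕ) :
    ((List.range m).map f).prod = ∏ k ∈ Finset.range m, f k := by
  induction m with
  | zero => simp
  | succ m ih => rw [List.range_succ, List.map_append, List.prod_append,
      Finset.prod_range_succ, ih]; simp

lemma list_smul_prod {d : ℕ} (L : List ℕ) (c : ℕ → ℝ) (M : ℕ → Matrix (Fin d) (Fin d) ℝ) :
    (L.map (fun k => c k • M k)).prod = (L.map c).prod • (L.map M).prod := by
  induction L with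
  | nil => simp
  | cons a L ih =>
    simp only [List.map_cons, List.prod_cons, ih]
    rw [smul_mul_assoc, mul_smul_comm, smul_smul]

end RMPaux

open RMPaux in
/-- with `B_n = ‖D̃_t ⋯ D̃_{t−n}‖₁`, `J_k = 1{min_{l=1,…,d}|ε_{t−k−l}| ≤ K₂}`,
`I_n = 1{Σ_{k=0}^n J_k > κn}` and `B_{n,2} = (1 − I_n) B_n`, if `E|ε₀| < ∞` and condition
(δ*) holds for some `κ ∈ (0,1)`, then `E[B_{n,2}] ≤ C γ^n` for constants `C < ∞`,
`γ ∈ (0,1)` and all `n ≥ 0`. -/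
theorem matrix_product_bad_part_contracts
    {Ω : Type*} [MeasurableSpace Ω] (P : Measure Ω) [IsProbabilityMeasure P]
    (ε : ℤ → Ω → ℝ) (hεmeas : ∀ i, Measurable (ε i))
    (hεindep : iIndepFun ε P)
    (hεident : ∀ i j : ℤ, Measure.map (ε i) P = Measure.map (ε j) P)
    (d : ℕ) (hd : 1 ≤ d) (Δ δ K₂ : ℝ) (hδpos : 0 < δ) (hδΔ : δ ≤ Δ) (hK₂ : 0 < K₂)
    (hmom : Integrable (fun ω => |ε 0 ω|) P)
    (κ : ℝ) (hκ : κ ∈ Set.Ioo (0:ℝ) 1)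
    (hδstar : δ < ((1 + ∫ ω, |ε 0 ω| ∂P) ^ ((d : ℝ) / (1 - κ))
        * (Δ + 1) ^ (κ * d / (1 - κ))
        * (∑ l ∈ range d, ∑ k ∈ range (l + 1), (l.choose k : ℝ)))⁻¹) :
    ∃ C : ℝ, ∃ γ ∈ Set.Ioo (0:ℝ) 1, ∀ (t : ℤ) (n : ℕ),
      ∫⁻ ω in {ω : Ω | ¬ (κ * n < ∑ k ∈ range (n + 1),
          (if ∃ l : Fin d, |ε (t - (k : ℤ) - (l : ℤ) - 1) ω| ≤ K₂ then (1:ℝ) else 0))},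
        ENNReal.ofReal (colSumNorm (DmatProd d Δ δ K₂ ε t n ω)) ∂P
        ≤ ENNReal.ofReal (C * γ ^ n) := by
  classical
  haveI : NeZero d := ⟨by omega⟩
  obtain ⟨hκ0, hκ1⟩ := hκ
  have hmb0 : 0 ≤ ∫ ω, |ε 0 ω| ∂P := integral_nonneg fun ω => abs_nonneg _
  set A : ℝ := 1 + ∫ ω, |ε 0 ω| ∂P with hA
  have hA1 : 1 ≤ A := by rw [hA]; linarith
  have hA0 : 0 < A := by linarith
  set Bp : ℝ := Δ + 1 with hBp
  have hΔ0 : 0 < Δ := lt_of_lt_of_le hδpos hδΔ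
  have hBp1 : 1 ≤ Bp := by rw [hBp]; linarith
  have hBp0 : 0 < Bp := by linarith
  -- the binomial double sum is `2^d - 1`
  have hS : (∑ l ∈ range d, ∑ k ∈ range (l + 1), (l.choose k : ℝ)) = 2 ^ d - 1 := by
    have h1 : ∀ l : ℕ, (∑ k ∈ range (l + 1), (l.choose k : ℝ)) = 2 ^ l := by
      intro l
      rw [← Nat.cast_sum, Nat.sum_range_choose]
      push_cast
      ring
    rw [Finset.sum_congr rfl fun l _ => h1 l, geom_sum_eq (by norm_num : (2:ℝ) ≠ 1) d]
    norm_num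
  set c : ℝ := (2 ^ d - 1) * δ with hc
  have h2d1 : (1:ℝ) ≤ 2 ^ d - 1 := by
    have h := pow_le_pow_right₀ (by norm_num : (1:ℝ) ≤ 2) hd
    norm_num at h
    linarith
  have hc0 : 0 < c := mul_pos (by linarith) hδpos
  have h1κ : 0 < 1 - κ := by linarith
  have hd0 : (0:ℝ) < d := by exact_mod_cast (by omega : 0 < d)
  set p : ℝ := (d:ℝ) / (1 - κ) with hp
  have hp0 : 0 < p := div_pos hd0 h1κ
  have hq0 : 0 ≤ κ * d / (1 - κ) := by positivity
  set X : ℝ := A ^ p * Bp ^ (κ * (d:ℝ) / (1 - κ)) with hX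
  have hXA : 1 ≤ A ^ p := by
    have := Real.rpow_le_rpow zero_le_one hA1 hp0.le
    rwa [Real.one_rpow] at this
  have hXB : 1 ≤ Bp ^ (κ * (d:ℝ) / (1 - κ)) := by
    have := Real.rpow_le_rpow zero_le_one hBp1 hq0
    rwa [Real.one_rpow] at this
  have hX1 : 1 ≤ X := by
    have hm : (1:ℝ) * 1 ≤ A ^ p * Bp ^ (κ * (d:ℝ) / (1 - κ)) :=
      mul_le_mul hXA hXB zero_le_one (le_trans zero_le_one hXA)
    rw [hX]
    linarith
  have hX0 : 0 < X := lt_of_lt_of_le one_pos hX1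
  -- `δ⋆` in product form
  have hδX : δ * (X * (2 ^ d - 1)) < 1 := by
    have h := hδstar
    rw [hS] at h
    have hpos : (0:ℝ) < X * (2 ^ d - 1) := mul_pos hX0 (by linarith)
    have h2 : δ * (X * (2 ^ d - 1)) < (X * (2 ^ d - 1))⁻¹ * (X * (2 ^ d - 1)) := by
      refine mul_lt_mul_of_pos_right ?_ hpos
      calc δ < (A ^ p * Bp ^ (κ * (d:ℝ) / (1 - κ)) * (2 ^ d - 1))⁻¹ := h
        _ = (X * (2 ^ d - 1))⁻¹ := by rw [hX]
    rwa [inv_mul_cancel₀ hpos.ne'] at h2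
  have hcX : c * X < 1 := by
    calc c * X = δ * (X * (2 ^ d - 1)) := by rw [hc]; ring
      _ < 1 := hδX
  have hc1 : c ≤ 1 := by
    have hm : c * 1 ≤ c * X := mul_le_mul_of_nonneg_left hX1 hc0.le
    linarith
  have hδ1 : δ ≤ 1 := by
    have hm : 1 * δ ≤ (2 ^ d - 1) * δ := mul_le_mul_of_nonneg_right h2d1 hδpos.le
    have hδc : δ ≤ c := by rw [hc]; linarith
    linarith
  set Y : ℝ := Bp ^ κ * c ^ ((1 - κ) / (d:ℝ)) with hY
  have hY0 : 0 < Y := mul_pos (Real.rpow_pos_of_pos hBp0 _) (Real.rpow_pos_of_pos hc0 _)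
  set γ : ℝ := A * Y with hγ
  have hγ0 : 0 < γ := mul_pos hA0 hY0
  have hγ1 : γ < 1 := by
    have hγp : γ ^ p = X * c := by
      have h1 : γ ^ p = A ^ p * (Bp ^ κ * c ^ ((1 - κ) / (d:ℝ))) ^ p := by
        rw [hγ, Real.mul_rpow hA0.le hY0.le, hY]
      rw [h1, Real.mul_rpow (Real.rpow_pos_of_pos hBp0 κ).le (Real.rpow_pos_of_pos hc0 _).le,
        ← Real.rpow_mul hBp0.le, ← Real.rpow_mul hc0.le]
      have e2 : (1 - κ) / (d:ℝ) * p = 1 := by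
        rw [hp]
        field_simp
      have e1 : κ * p = κ * (d:ℝ) / (1 - κ) := by rw [hp]; ring
      rw [e1, e2, Real.rpow_one, hX]
      ring
    by_contra hcon
    push_neg at hcon
    have h1 : (1:ℝ) ≤ γ ^ p := by
      have := Real.rpow_le_rpow zero_le_one hcon hp0.le
      rwa [Real.one_rpow] at this
    rw [hγp] at h1
    linarith
  -- the constants
  refine ⟨A * Bp ^ (d - 1) * c ^ (((2:ℝ) - (d:ℝ)) / (d:ℝ)), γ, ⟨hγ0, hγ1⟩, ?_⟩
  intro t n
  set Kn : ℝ := c ^ (((2:ℝ) - (d:ℝ)) / (d:ℝ)) * Y ^ (n:ℝ) * Bp ^ (d - 1) with hKn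
  have hKn0 : 0 ≤ Kn := by
    rw [hKn]
    have h1 : (0:ℝ) < c ^ (((2:ℝ) - (d:ℝ)) / (d:ℝ)) := Real.rpow_pos_of_pos hc0 _
    have h2 : (0:ℝ) < Y ^ (n:ℝ) := Real.rpow_pos_of_pos hY0 _
    have h3 : (0:ℝ) < Bp ^ (d - 1) := pow_pos hBp0 _
    exact (mul_pos (mul_pos h1 h2) h3).le
  have hSc0 : ∀ ω, 0 ≤ ∏ k ∈ range (n+1), (1 + |ε (t - (k:ℤ)) ω|) :=
    fun ω => Finset.prod_nonneg fun k _ => by positivity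
  -- pointwise bound on the bad event
  have hpt : ∀ ω ∈ {ω : Ω | ¬ (κ * n < ∑ k ∈ range (n + 1),
      (if ∃ l : Fin d, |ε (t - (k : ℤ) - (l : ℤ) - 1) ω| ≤ K₂ then (1:ℝ) else 0))},
      colSumNorm (DmatProd d Δ δ K₂ ε t n ω)
        ≤ (∏ k ∈ range (n+1), (1 + |ε (t - (k:ℤ)) ω|)) * Kn := by
    intro ω hω
    simp only [Set.mem_setOf_eq] at hω
    have hωle : ∑ k ∈ range (n + 1),
        (if ∃ l : Fin d, |ε (t - (k : ℤ) - (l : ℤ) - 1) ω| ≤ K₂ then (1:ℝ) else 0) ≤ κ * n :=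
      not_lt.mp hω
    set J : ℕ → Prop := fun k => ∃ l : Fin d, |ε (t - (k:ℤ) - (l:ℤ) - 1) ω| ≤ K₂ with hJdef
    set zf : ℕ → ℝ := fun k =>
      if ∀ l : Fin d, |ε (t - (k:ℤ) - 1 - (l:ℤ)) ω| ≤ K₂ then Δ else δ with hzf
    have hzbound : ∀ k, 0 ≤ zf k ∧ zf k ≤ Δ := by
      intro k
      constructor
      · rw [hzf]
        dsimp only
        split_ifs
        · exact hΔ0.le
        · exact hδpos.le
      · rw [hzf]
        dsimp only
        split_ifs
        · exact le_refl Δ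
        · exact hδΔ
    have hJz : ∀ k, ¬ J k → ∀ i < d, zf (k + i) = δ := by
      intro k hk i hi
      have hnall : ¬ ∀ l : Fin d, |ε (t - ((k + i : ℕ) : ℤ) - 1 - (l:ℤ)) ω| ≤ K₂ := by
        intro hall
        apply hk
        refine ⟨⟨i, hi⟩, ?_⟩
        have h0 : |ε (t - ((k + i : ℕ) : ℤ) - 1 - ((0:ℕ):ℤ)) ω| ≤ K₂ := hall ⟨0, by omega⟩
        have harg : t - ((k + i : ℕ) : ℤ) - 1 - ((0:ℕ):ℤ) = t - (k:ℤ) - (i:ℤ) - 1 := by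
          push_cast
          ring
        rw [harg] at h0
        show |ε (t - (k:ℤ) - (i:ℤ) - 1) ω| ≤ K₂
        exact h0
      rw [hzf]
      dsimp only
      rw [if_neg hnall]
    -- the count bound
    have hcount : ((Jcount J 0 (n+1) : ℕ) : ℝ) ≤ κ * n := by
      refine le_trans (le_of_eq ?_) hωle
      unfold Jcount
      rw [Nat.cast_sum]
      refine Finset.sum_congr rfl fun k _ => ?_
      by_cases hk : ∃ l : Fin d, |ε (t - (k:ℤ) - (l:ℤ) - 1) ω| ≤ K₂
      · have hk' : J (0 + k) := by
          rw [Nat.zero_add]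
          exact hk
        rw [if_pos hk', if_pos hk]
        norm_num
      · have hk' : ¬ J (0 + k) := by
          rw [Nat.zero_add]
          exact hk
        rw [if_neg hk', if_neg hk]
        norm_num
    obtain ⟨g, h, hgh, hhJ, hnorm⟩ := det_bound hδpos hδ1 hδΔ zf J hzbound hJz (n+1) 0
    have hcnt2 : (n:ℝ) + 2 ≤ (g:ℝ) * d + h + d := by
      have hnat : n + 2 ≤ g * d + h + d := by omega
      exact_mod_cast hnat
    have hhr : (h:ℝ) ≤ κ * n := by
      refine le_trans ?_ hcount
      exact_mod_cast hhJ
    have hmain := real_combine hc0 hc1 hBp1 hd n g h hcnt2 hhr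
    rw [← hY] at hmain
    -- decompose the matrix product
    have hdec : DmatProd d Δ δ K₂ ε t n ω
        = (∏ k ∈ range (n+1), (1 + |ε (t - (k:ℤ)) ω|)) • Qz d zf 0 (n+1) := by
      have hdec0 : DmatProd d Δ δ K₂ ε t n ω
          = ((List.range (n+1)).map (fun k : ℕ => Dmat d Δ δ K₂ ε (t - (k:ℤ)) ω)).prod := by
        unfold DmatProd
        simp only [List.pure_def, List.bind_eq_flatMap]
        have hbind : ((List.range (n+1)).flatMap fun a : ℕ => [(a:ℤ)])
            = (List.range (n+1)).map (fun a : ℕ => (a:ℤ)) :=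
          List.flatMap_pure_eq_map (fun a : ℕ => (a:ℤ)) (List.range (n+1))
        rw [hbind, List.map_map]
        rfl
      rw [hdec0]
      have hmap : ((List.range (n+1)).map (fun k : ℕ => Dmat d Δ δ K₂ ε (t - (k:ℤ)) ω))
          = (List.range (n+1)).map
              (fun k : ℕ => (1 + |ε (t - (k:ℤ)) ω|) • companionMat d (zf k)) := by
        refine List.map_congr_left fun k _ => ?_
        unfold Dmat
        rw [hzf]
      rw [hmap, list_smul_prod, list_range_prod]
      congr 1
      unfold Qz
      exact congrArg _ (List.map_congr_left fun i _ => by rw [Nat.zero_add])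
    rw [hdec]
    refine le_trans (colSumNorm_smul_le _ (hSc0 ω) _) ?_
    refine mul_le_mul_of_nonneg_left ?_ (hSc0 ω)
    rw [← hc, ← hBp] at hnorm
    refine le_trans hnorm ?_
    rw [hKn]
    refine mul_le_mul_of_nonneg_right ?_ (pow_pos hBp0 _).le
    exact hmain
  -- the independent-product integral
  set Gf : ℤ → Ω → ENNReal := fun s ω => ENNReal.ofReal (1 + |ε s ω|) with hGf
  have hGmeas : ∀ s, Measurable (Gf s) :=
    fun s => (measurable_const.add (hεmeas s).abs).ennreal_ofReal
  have hGindep : iIndepFun Gf P :=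
    hεindep.comp (fun _ x => ENNReal.ofReal (1 + |x|))
      (fun _ => (measurable_const.add measurable_abs).ennreal_ofReal)
  have hGint : ∀ s : ℤ, ∫⁻ ω, Gf s ω ∂P = ENNReal.ofReal A := by
    intro s
    have habs : Integrable (fun ω => |ε s ω|) P := by
      have h0 : Integrable (fun x : ℝ => |x|) (P.map (ε 0)) :=
        (integrable_map_measure measurable_abs.aestronglyMeasurable
          (hεmeas 0).aemeasurable).mpr hmom
      have h1 : Integrable (fun x : ℝ => |x|) (P.map (ε s)) := by
        rw [hεident s 0]
        exact h0
      exact (integrable_map_measure measurable_abs.aestronglyMeasurable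
        (hεmeas s).aemeasurable).mp h1
    have hint : Integrable (fun ω => 1 + |ε s ω|) P := (integrable_const 1).add habs
    have hnn : 0 ≤ᵐ[P] fun ω => 1 + |ε s ω| := Filter.Eventually.of_forall fun ω => by positivity
    rw [hGf]
    rw [← ofReal_integral_eq_lintegral_ofReal hint hnn]
    congr 1
    have hmap1 : ∫ x, |x| ∂(P.map (ε s)) = ∫ ω, |ε s ω| ∂P :=
      integral_map (hεmeas s).aemeasurable measurable_abs.aestronglyMeasurable
    have hmap0 : ∫ x, |x| ∂(P.map (ε 0)) = ∫ ω, |ε 0 ω| ∂P :=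
      integral_map (hεmeas 0).aemeasurable measurable_abs.aestronglyMeasurable
    have h2 : ∫ ω, |ε s ω| ∂P = ∫ ω, |ε 0 ω| ∂P := by
      rw [← hmap1, hεident s 0, hmap0]
    rw [integral_add (integrable_const 1) habs, integral_const, h2, hA]
    simp
  have htot : ∫⁻ ω, ∏ k ∈ range (n+1), Gf (t - (k:ℤ)) ω ∂P = (ENNReal.ofReal A) ^ (n+1) := by
    have hinj : ∀ a ∈ range (n+1), ∀ b ∈ range (n+1),
        (fun k : ℕ => t - (k:ℤ)) a = (fun k : ℕ => t - (k:ℤ)) b → a = b := by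
      intro a _ b _ hab
      simp only at hab
      omega
    have hpoint : ∀ ω, ∏ k ∈ range (n+1), Gf (t - (k:ℤ)) ω
        = ∏ i ∈ (range (n+1)).image (fun k : ℕ => t - (k:ℤ)), Gf i ω := fun ω =>
      (Finset.prod_image (f := fun i => Gf i ω) (g := fun k : ℕ => t - (k:ℤ))
        (fun a ha b hb hab => hinj a ha b hb hab)).symm
    have himg : ∏ i ∈ (range (n+1)).image (fun k : ℕ => t - (k:ℤ)), (∫⁻ ω, Gf i ω ∂P)
        = ∏ k ∈ range (n+1), ∫⁻ ω, Gf (t - (k:ℤ)) ω ∂P :=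
      Finset.prod_image (fun a ha b hb hab => hinj a ha b hb hab)
    have hcongr : ∏ k ∈ range (n+1), (∫⁻ ω, Gf (t - (k:ℤ)) ω ∂P)
        = ∏ _k ∈ range (n+1), ENNReal.ofReal A :=
      Finset.prod_congr rfl fun k _ => hGint (t - (k:ℤ))
    rw [lintegral_congr hpoint, lintegral_indep_prod P Gf hGmeas hGindep, himg, hcongr,
      Finset.prod_const, Finset.card_range]
  -- final assembly
  have hmeasg : Measurable fun ω =>
      ENNReal.ofReal ((∏ k ∈ range (n+1), (1 + |ε (t - (k:ℤ)) ω|)) * Kn) :=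
    ((Finset.measurable_prod _ fun k _ =>
      (measurable_const.add (hεmeas _).abs)).mul_const Kn).ennreal_ofReal
  have hsplit : ∀ ω : Ω,
      ENNReal.ofReal ((∏ k ∈ range (n+1), (1 + |ε (t - (k:ℤ)) ω|)) * Kn)
        = (∏ k ∈ range (n+1), Gf (t - (k:ℤ)) ω) * ENNReal.ofReal Kn := by
    intro ω
    rw [ENNReal.ofReal_mul (hSc0 ω), ENNReal.ofReal_prod_of_nonneg (fun k _ => by positivity)]
  have hfinal : A ^ (n+1) * Kn
      = (A * Bp ^ (d - 1) * c ^ (((2:ℝ) - (d:ℝ)) / (d:ℝ))) * γ ^ n := by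
    clear_value A Bp c Y γ Kn
    rw [hKn, hγ, Real.rpow_natCast, mul_pow]
    ring
  calc ∫⁻ ω in {ω : Ω | ¬ (κ * n < ∑ k ∈ range (n + 1),
          (if ∃ l : Fin d, |ε (t - (k : ℤ) - (l : ℤ) - 1) ω| ≤ K₂ then (1:ℝ) else 0))},
        ENNReal.ofReal (colSumNorm (DmatProd d Δ δ K₂ ε t n ω)) ∂P
      ≤ ∫⁻ ω in {ω : Ω | ¬ (κ * n < ∑ k ∈ range (n + 1),
          (if ∃ l : Fin d, |ε (t - (k : ℤ) - (l : ℤ) - 1) ω| ≤ K₂ then (1:ℝ) else 0))},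
        ENNReal.ofReal ((∏ k ∈ range (n+1), (1 + |ε (t - (k:ℤ)) ω|)) * Kn) ∂P :=
        setLIntegral_mono hmeasg fun ω hω => ENNReal.ofReal_le_ofReal (hpt ω hω)
    _ ≤ ∫⁻ ω, ENNReal.ofReal ((∏ k ∈ range (n+1), (1 + |ε (t - (k:ℤ)) ω|)) * Kn) ∂P :=
        setLIntegral_le_lintegral _ _
    _ = ∫⁻ ω, (∏ k ∈ range (n+1), Gf (t - (k:ℤ)) ω) * ENNReal.ofReal Kn ∂P :=
        lintegral_congr hsplit
    _ = (∫⁻ ω, ∏ k ∈ range (n+1), Gf (t - (k:ℤ)) ω ∂P) * ENNReal.ofReal Kn :=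
        lintegral_mul_const' _ _ ENNReal.ofReal_ne_top
    _ = (ENNReal.ofReal A) ^ (n+1) * ENNReal.ofReal Kn := by rw [htot]
    _ = ENNReal.ofReal (A ^ (n+1) * Kn) := by
        rw [← ENNReal.ofReal_pow hA0.le, ← ENNReal.ofReal_mul (pow_pos hA0 _).le]
    _ ≤ ENNReal.ofReal ((A * Bp ^ (d - 1) * c ^ (((2:ℝ) - (d:ℝ)) / (d:ℝ))) * γ ^ n) :=
        ENNReal.ofReal_le_ofReal (le_of_eq hfinal)
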